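/- Define vol(R(n)) = (n/2)·(2Λ(θ_n) + Λ(θ_n + π/n) + Λ(θ_n − π/n) + Λ(π/2 − 2θ_n)) where θ_n = π/2 − arccos(1/(2 cos(π/n))). Then vol(R(n))/n tends to (5/4)·v₃ as n → ∞, where v₃ = 2Λ(π/6). -/

import Mathlib

open Real Filter

noncomputable def Λ (x : ℝ) : ℝ := -∫ t in (0:ℝ)..x, Real.log |2 * Real.sin t|

noncomputable def θ (n : ℕ) : ℝ := π / 2 - Real.arccos (1 / (2 * Real.cos (π / n)))

noncomputable def volR (n : ℕ) : ℝ :=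
  (n / 2 : ℝ) * (2 * Λ (θ n) + Λ (θ n + π / n) + Λ (θ n - π / n) + Λ (π / 2 - 2 * θ n))

lemma integrable_aux :
    IntervalIntegrable (fun t => Real.log |2 * Real.sin t|) MeasureTheory.volume 0 (π / 4) := by
  have hπ : (0:ℝ) < π := Real.pi_pos
  have hg : IntervalIntegrable (fun t : ℝ => Real.log 2 + 2 * t ^ (-(1/2) : ℝ))
      MeasureTheory.volume 0 (π / 4) := by
    refine intervalIntegrable_const.add ?_
    exact (intervalIntegral.intervalIntegrable_rpow' (by norm_num)).const_mul 2
  refine hg.mono_fun' ?_ ?_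
  · refine Measurable.aestronglyMeasurable ?_
    exact Real.measurable_log.comp ((measurable_const.mul Real.measurable_sin).abs)
  · rw [Filter.EventuallyLE, MeasureTheory.ae_restrict_iff' measurableSet_uIoc]
    refine MeasureTheory.ae_of_all _ ?_
    intro t ht
    rw [Set.uIoc_of_le (by positivity)] at ht
    obtain ⟨ht0, ht1⟩ := ht
    have hs0 : 0 < Real.sin t := Real.sin_pos_of_pos_of_lt_pi ht0 (by nlinarith)
    have habs : |2 * Real.sin t| = 2 * Real.sin t := abs_of_pos (by linarith)
    rw [habs]
    -- bounds : t ≤ 2 sin t ≤ 2 t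
    have hub : 2 * Real.sin t ≤ 2 * t := by
      have := Real.sin_lt ht0
      linarith
    have hlb : t ≤ 2 * Real.sin t := by
      have h2 : 2 / π * t ≤ Real.sin t := Real.mul_le_sin ht0.le (by linarith)
      have heq : 2 / π * t = 2 * t / π := by ring
      rw [heq, div_le_iff₀ hπ] at h2
      nlinarith [Real.pi_le_four, hs0.le]
    have ht1' : t < 1 := by nlinarith [Real.pi_lt_d2]
    -- log bounds
    have hlog_ub : Real.log (2 * Real.sin t) ≤ Real.log 2 + Real.log t := by
      rw [← Real.log_mul (by norm_num) (ne_of_gt ht0)]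
      exact Real.log_le_log (by positivity) hub
    have hlog_lb : Real.log t ≤ Real.log (2 * Real.sin t) :=
      Real.log_le_log ht0 hlb
    have hlogt_neg : Real.log t < 0 := Real.log_neg ht0 ht1'
    have hkey : -Real.log t ≤ 2 * t ^ (-(1/2) : ℝ) := by
      have h1 : -Real.log t = 2 * Real.log (t ^ (-(1/2) : ℝ)) := by
        rw [Real.log_rpow ht0]; ring
      have h2 : Real.log (t ^ (-(1/2) : ℝ)) ≤ t ^ (-(1/2) : ℝ) - 1 :=
        Real.log_le_sub_one_of_pos (Real.rpow_pos_of_pos ht0 _)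
      have h3 : (0:ℝ) < t ^ (-(1/2) : ℝ) := Real.rpow_pos_of_pos ht0 _
      linarith
    have hlog2 : (0:ℝ) ≤ Real.log 2 := Real.log_nonneg (by norm_num)
    rw [Real.norm_eq_abs, abs_le]
    constructor
    · have : (0:ℝ) < t ^ (-(1/2) : ℝ) := Real.rpow_pos_of_pos ht0 _
      nlinarith [hlog_lb, hkey]
    · nlinarith [hlog_ub, hkey]

lemma continuousAt_Λ : ContinuousAt Λ (π / 6) := by
  have hπ : (0:ℝ) < π := Real.pi_pos
  have hc : ContinuousOn (fun x => ∫ t in (0:ℝ)..x, Real.log |2 * Real.sin t|)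
      (Set.uIcc (0:ℝ) (π/4)) :=
    intervalIntegral.continuousOn_primitive_interval' integrable_aux Set.left_mem_uIcc
  have hmem : Set.uIcc (0:ℝ) (π/4) ∈ nhds (π/6) := by
    rw [Set.uIcc_of_le (by positivity)]
    exact Icc_mem_nhds (by linarith) (by linarith)
  have := (hc.continuousAt hmem).neg
  exact this

theorem volR_div_n_tendsto :
    Tendsto (fun n : ℕ => volR n / n) atTop (nhds ((5 / 4) * (2 * Λ (π / 6)))) := by
  have hπ : (0:ℝ) < π := Real.pi_pos
  have h0 : Tendsto (fun n : ℕ => π / n) atTop (nhds 0) :=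
    tendsto_const_div_atTop_nhds_zero_nat π
  have hθ : Tendsto (fun n : ℕ => θ n) atTop (nhds (π/6)) := by
    have harccos : Tendsto (fun n : ℕ => Real.arccos (1 / (2 * Real.cos (π / n)))) atTop
        (nhds (π/3)) := by
      have hcos : Tendsto (fun n : ℕ => Real.cos (π / n)) atTop (nhds 1) := by
        have := (Real.continuous_cos.tendsto 0).comp h0
        simpa [Function.comp_def] using this
      have hinner : Tendsto (fun n : ℕ => 1 / (2 * Real.cos (π / n))) atTop (nhds (1/2)) := by
        have h := (hcos.const_mul 2).inv₀ (by norm_num : (2:ℝ) * 1 ≠ 0)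
        simpa [one_div, mul_one] using h
      have := (Real.continuous_arccos.tendsto (1/2)).comp hinner
      have harc : Real.arccos (1/2) = π/3 := by
        rw [← Real.cos_pi_div_three]
        exact Real.arccos_cos (by positivity) (by linarith)
      rwa [harc] at this
    have : Tendsto (fun n : ℕ => π / 2 - Real.arccos (1 / (2 * Real.cos (π / n)))) atTop
        (nhds (π/2 - π/3)) := tendsto_const_nhds.sub harccos
    have h6 : π/2 - π/3 = π/6 := by ring
    rw [h6] at this
    exact this
  have hΛ := continuousAt_Λ
  have h1 : Tendsto (fun n : ℕ => Λ (θ n)) atTop (nhds (Λ (π/6))) := hΛ.tendsto.comp hθ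
  have h2 : Tendsto (fun n : ℕ => Λ (θ n + π / n)) atTop (nhds (Λ (π/6))) := by
    refine hΛ.tendsto.comp ?_
    have := hθ.add h0
    simpa using this
  have h3 : Tendsto (fun n : ℕ => Λ (θ n - π / n)) atTop (nhds (Λ (π/6))) := by
    refine hΛ.tendsto.comp ?_
    have := hθ.sub h0
    simpa using this
  have h4 : Tendsto (fun n : ℕ => Λ (π / 2 - 2 * θ n)) atTop (nhds (Λ (π/6))) := by
    refine hΛ.tendsto.comp ?_
    have : Tendsto (fun n : ℕ => π / 2 - 2 * θ n) atTop (nhds (π/2 - 2 * (π/6))) :=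
      tendsto_const_nhds.sub (hθ.const_mul 2)
    have h6 : π/2 - 2 * (π/6) = π/6 := by ring
    rwa [h6] at this
  have hB : Tendsto
      (fun n : ℕ => (2 * Λ (θ n) + Λ (θ n + π / n) + Λ (θ n - π / n) + Λ (π / 2 - 2 * θ n)) / 2)
      atTop (nhds ((5/4) * (2 * Λ (π/6)))) := by
    have := ((((h1.const_mul 2).add h2).add h3).add h4).div_const 2
    convert this using 2
    ring
  refine hB.congr' ?_
  filter_upwards [eventually_ge_atTop 1] with n hn
  have hn' : (n:ℝ) ≠ 0 := Nat.cast_ne_zero.mpr (by omega)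
  simp only [volR]
  field_simp
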